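/- Let a, b be rational numbers with b not a nonpositive integer and a not a nonpositive integer. Then the common denominator of the rationals (a)_0/(b)_0, (a)_1/(b)_1, …, (a)_n/(b)_n grows at most geometrically in n: there exists C > 0 such that the least d_n ∈ ℕ with d_n (a)_m/(b)_m ∈ ℤ for all m ≤ n satisfies d_n ≤ C^n. -/

import Mathlib

lemma count_upper (q m : ℕ) (hq : 0 < q) (B β : ℤ) (hco : IsCoprime (β : ℤ) (q : ℤ)) :
    ((Finset.range m).filter (fun i : ℕ => (q : ℤ) ∣ B + (i : ℤ) * β)).card ≤ m / q + 1 := by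
  classical
  rw [← Finset.card_range (m / q + 1)]
  apply Finset.card_le_card_of_injOn (fun i => i / q)
  · intro i hi
    simp only [Finset.mem_coe, Finset.mem_filter, Finset.mem_range] at hi ⊢
    have : i / q ≤ (m - 1) / q := Nat.div_le_div_right (by omega)
    have h2 : (m-1)/q ≤ m / q := Nat.div_le_div_right (by omega)
    omega
  · intro i hi j hj hij
    simp only [Finset.mem_coe, Finset.mem_filter, Finset.mem_range] at hi hj
    have key : ∀ i j : ℕ, j ≤ i → (q : ℤ) ∣ B + (i : ℤ) * β → (q : ℤ) ∣ B + (j : ℤ) * β →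
        i % q = j % q := by
      intro i j hle h1 h2
      have hd : (q : ℤ) ∣ ((i : ℤ) - j) * β := by
        have := dvd_sub h1 h2
        have e : (B + (i:ℤ) * β) - (B + (j:ℤ) * β) = ((i:ℤ) - j) * β := by ring
        rwa [e] at this
      have hd2 : (q : ℤ) ∣ ((i:ℤ) - j) := hco.symm.dvd_of_dvd_mul_right hd
      have hd3 : q ∣ i - j := by
        have : ((i - j : ℕ) : ℤ) = (i:ℤ) - j := by omega
        rw [← this] at hd2
        exact_mod_cast hd2
      have := (Nat.modEq_iff_dvd' hle).mpr hd3
      simpa [Nat.ModEq] using this.symm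
    rcases le_total j i with h | h
    · have h1 := key i j h hi.2 hj.2
      have h2 := Nat.div_add_mod i q
      have h3 := Nat.div_add_mod j q
      have hij' : i / q = j / q := by simpa using hij
      calc i = q * (i / q) + i % q := h2.symm
        _ = q * (j / q) + j % q := by rw [hij', h1]
        _ = j := h3
    · have h1 := key j i h hj.2 hi.2
      have h2 := Nat.div_add_mod i q
      have h3 := Nat.div_add_mod j q
      have hij' : i / q = j / q := by simpa using hij
      calc i = q * (i / q) + i % q := h2.symm
        _ = q * (j / q) + j % q := by rw [hij', h1]
        _ = j := h3


lemma count_lower (q m : ℕ) (hq : 0 < q) (B β : ℤ) (hco : IsCoprime (β : ℤ) (q : ℤ)) :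
    m / q ≤ ((Finset.range m).filter (fun i : ℕ => (q : ℤ) ∣ B + (i : ℤ) * β)).card := by
  classical
  obtain ⟨u, v, huv⟩ := hco
  have hq' : (0:ℤ) < q := by exact_mod_cast hq
  set i₀ : ℕ := ((-B * u) % q).toNat with hi₀
  have hmod : 0 ≤ (-B * u) % q := Int.emod_nonneg _ (ne_of_gt hq')
  have hlt : (-B * u) % q < q := Int.emod_lt_of_pos _ hq'
  have hi₀q : i₀ < q := by omega
  have hi₀cast : (i₀ : ℤ) = (-B * u) % q := by omega
  have h1 : (q : ℤ) ∣ ((i₀ : ℤ) + B * u) :=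
    ⟨-((-B*u)/q), by rw [hi₀cast, Int.emod_def]; ring⟩
  have hdvd0 : (q : ℤ) ∣ B + (i₀ : ℤ) * β := by
    have h2 : B + (i₀:ℤ) * β = ((i₀:ℤ) + B * u) * β + B * (v * q) := by
      linear_combination (-B) * huv
    rw [h2]
    exact dvd_add (Dvd.dvd.mul_right h1 β) ⟨B * v, by ring⟩
  rw [← Finset.card_range (m / q)]
  apply Finset.card_le_card_of_injOn (fun j => i₀ + j * q)
  · intro j hj
    simp only [Finset.mem_coe, Finset.mem_range] at hj
    simp only [Finset.mem_coe, Finset.mem_filter, Finset.mem_range]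
    have hjq : j * q + q ≤ (m / q) * q := by
      have : j + 1 ≤ m / q := hj
      calc j * q + q = (j + 1) * q := by ring
        _ ≤ (m / q) * q := Nat.mul_le_mul_right q this
    have hdm : (m / q) * q ≤ m := Nat.div_mul_le_self m q
    constructor
    · omega
    · have : B + ((i₀ + j * q : ℕ) : ℤ) * β = (B + (i₀:ℤ) * β) + q * (j * β) := by
        push_cast; ring
      rw [this]
      exact dvd_add hdvd0 ⟨j * β, rfl⟩
  · intro x hx y hy hxy
    have hxy' : i₀ + x * q = i₀ + y * q := hxy
    have : x * q = y * q := by omega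
    exact Nat.eq_of_mul_eq_mul_right hq this


lemma fact_eq_card_icc {p n X : ℕ} (hp : p.Prime) (hn : 0 < n) (hnX : n ≤ X) :
    n.factorization p = ((Finset.Icc 1 (Nat.log p X)).filter (fun k => p ^ k ∣ n)).card := by
  classical
  have hvK : n.factorization p ≤ Nat.log p X := by
    have h1 : p ^ (n.factorization p) ∣ n := Nat.ordProj_dvd n p
    have h2 : p ^ (n.factorization p) ≤ n := Nat.le_of_dvd hn h1
    exact Nat.le_log_of_pow_le hp.one_lt (le_trans h2 hnX)
  have : (Finset.Icc 1 (Nat.log p X)).filter (fun k => p ^ k ∣ n)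
      = Finset.Icc 1 (n.factorization p) := by
    ext k
    simp only [Finset.mem_filter, Finset.mem_Icc]
    constructor
    · rintro ⟨⟨h1, h2⟩, hdvd⟩
      exact ⟨h1, (Nat.Prime.pow_dvd_iff_le_factorization hp hn.ne').mp hdvd⟩
    · rintro ⟨h1, h2⟩
      exact ⟨⟨h1, le_trans h2 hvK⟩, (Nat.Prime.pow_dvd_iff_le_factorization hp hn.ne').mpr h2⟩
  rw [this, Nat.card_Icc]
  omega

lemma prod_fact_eq_sum_counts (p m X : ℕ) (hp : p.Prime) (t : ℕ → ℤ)
    (ht0 : ∀ i < m, t i ≠ 0) (htX : ∀ i < m, (t i).natAbs ≤ X) :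
    (∏ i ∈ Finset.range m, t i).natAbs.factorization p =
      ∑ k ∈ Finset.Icc 1 (Nat.log p X),
        ((Finset.range m).filter (fun i : ℕ => ((p : ℤ)) ^ k ∣ t i)).card := by
  classical
  have habs : (∏ i ∈ Finset.range m, t i).natAbs = ∏ i ∈ Finset.range m, (t i).natAbs := by
    exact map_prod Int.natAbsHom t (Finset.range m)
  rw [habs, Nat.factorization_prod (fun i hi => by
    simp only [Finset.mem_range] at hi
    exact Int.natAbs_ne_zero.mpr (ht0 i hi))]
  simp only [Finset.sum_apply']
  have hstep : ∀ i ∈ Finset.range m, (t i).natAbs.factorization p =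
      ((Finset.Icc 1 (Nat.log p X)).filter (fun k => p ^ k ∣ (t i).natAbs)).card := by
    intro i hi
    simp only [Finset.mem_range] at hi
    exact fact_eq_card_icc hp (Int.natAbs_pos.mpr (ht0 i hi)) (htX i hi)
  rw [Finset.sum_congr rfl hstep]
  simp only [Finset.card_filter]
  rw [Finset.sum_comm]
  apply Finset.sum_congr rfl
  intro k _
  apply Finset.sum_congr rfl
  intro i _
  congr 1
  simp only [eq_iff_iff]
  rw [← Int.natAbs_dvd_natAbs]
  simp [Int.natAbs_pow]


open Finset

lemma hXpow (X : ℕ) (hX : 1 ≤ X) : ((X:ℝ)) ^ (Nat.sqrt X) ≤ 8 ^ X := by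
  have hx1 : (1:ℝ) ≤ (X:ℝ) := by exact_mod_cast hX
  have hx0 : (0:ℝ) < (X:ℝ) := by linarith
  set s : ℝ := (Nat.sqrt X : ℝ) with hs
  have hs0 : 0 ≤ s := by positivity
  have hssq : s * s ≤ (X:ℝ) := by
    have h := Nat.sqrt_le' X
    calc s * s = ((Nat.sqrt X ^ 2 : ℕ) : ℝ) := by push_cast; ring
      _ ≤ (X:ℝ) := by exact_mod_cast h
  have hsle : s ≤ Real.sqrt (X:ℝ) := by
    exact (Real.le_sqrt hs0 (le_of_lt hx0)).mpr (by nlinarith)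
  have hlog : Real.log (X:ℝ) ≤ 2 * Real.sqrt (X:ℝ) := by
    have h1 : Real.log (Real.sqrt (X:ℝ)) = Real.log (X:ℝ) / 2 := Real.log_sqrt hx0.le
    have h2 : Real.log (Real.sqrt (X:ℝ)) ≤ Real.sqrt (X:ℝ) - 1 :=
      Real.log_le_sub_one_of_pos (Real.sqrt_pos.mpr hx0)
    nlinarith [Real.sqrt_nonneg (X:ℝ)]
  have hXs : ((X:ℝ)) ^ (Nat.sqrt X) = Real.exp (s * Real.log (X:ℝ)) := by
    rw [← Real.exp_log hx0, ← Real.exp_nat_mul]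
    simp [hs, Real.exp_log hx0]
  have h8 : (8:ℝ) ^ X = Real.exp ((X:ℝ) * Real.log 8) := by
    rw [← Real.exp_log (by norm_num : (0:ℝ) < 8), ← Real.exp_nat_mul,
      Real.log_exp]
  have hlog8 : (2:ℝ) ≤ Real.log 8 := by
    have h : Real.log 8 = 3 * Real.log 2 := by
      rw [show (8:ℝ) = 2 ^ 3 by norm_num, Real.log_pow]; push_cast; ring
    have := Real.log_two_gt_d9
    nlinarith
  rw [hXs, h8]
  apply Real.exp_le_exp.mpr
  have hsq : Real.sqrt (X:ℝ) * Real.sqrt (X:ℝ) = (X:ℝ) := Real.mul_self_sqrt hx0.le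
  have hlognn : 0 ≤ Real.log (X:ℝ) := Real.log_nonneg hx1
  calc s * Real.log (X:ℝ) ≤ Real.sqrt (X:ℝ) * (2 * Real.sqrt (X:ℝ)) := by
        apply mul_le_mul hsle hlog hlognn (Real.sqrt_nonneg _)
    _ = 2 * (X:ℝ) := by nlinarith
    _ ≤ (X:ℝ) * Real.log 8 := by nlinarith

lemma hsecond (X : ℕ) (hX : 1 ≤ X) :
    (∏ p ∈ (Finset.range (X + 1)).filter Nat.Prime, p ^ (Nat.log p X - 1)) ≤ X ^ (Nat.sqrt X) := by
  classical
  set P := (Finset.range (X + 1)).filter Nat.Prime with hP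
  have hsub : ∏ p ∈ P, p ^ (Nat.log p X - 1)
      = ∏ p ∈ P.filter (fun p => 2 ≤ Nat.log p X), p ^ (Nat.log p X - 1) := by
    symm
    apply Finset.prod_filter_of_ne
    intro p hp hne
    by_contra h
    push_neg at h
    interval_cases h' : Nat.log p X <;> simp_all
  rw [hsub]
  have hle : ∀ p ∈ P.filter (fun p => 2 ≤ Nat.log p X), p ^ (Nat.log p X - 1) ≤ X := by
    intro p hp
    simp only [Finset.mem_filter, hP, Finset.mem_range] at hp
    calc p ^ (Nat.log p X - 1) ≤ p ^ (Nat.log p X) :=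
          Nat.pow_le_pow_right hp.1.2.pos (by omega)
      _ ≤ X := Nat.pow_log_le_self p (by omega)
  calc ∏ p ∈ P.filter (fun p => 2 ≤ Nat.log p X), p ^ (Nat.log p X - 1)
      ≤ ∏ _p ∈ P.filter (fun p => 2 ≤ Nat.log p X), X := Finset.prod_le_prod' hle
    _ = X ^ (P.filter (fun p => 2 ≤ Nat.log p X)).card := by rw [Finset.prod_const]
    _ ≤ X ^ (Nat.sqrt X) := by
        apply Nat.pow_le_pow_right (by omega)
        have hsubset : P.filter (fun p => 2 ≤ Nat.log p X) ⊆ Finset.Icc 2 (Nat.sqrt X) := by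
          intro p hp
          simp only [Finset.mem_filter, hP, Finset.mem_range] at hp
          simp only [Finset.mem_Icc]
          constructor
          · exact hp.1.2.two_le
          · apply Nat.le_sqrt.mpr
            calc p * p = p ^ 2 := by ring
              _ ≤ p ^ (Nat.log p X) := Nat.pow_le_pow_right hp.1.2.pos hp.2
              _ ≤ X := Nat.pow_log_le_self p (by omega)
        calc (P.filter (fun p => 2 ≤ Nat.log p X)).card ≤ (Finset.Icc 2 (Nat.sqrt X)).card :=
              Finset.card_le_card hsubset
          _ ≤ Nat.sqrt X := by rw [Nat.card_Icc]; omega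


open Finset

noncomputable def Lprod (X : ℕ) : ℕ :=
  ∏ p ∈ (Finset.range (X + 1)).filter Nat.Prime, p ^ (Nat.log p X)

lemma Lprod_pos (X : ℕ) : 0 < Lprod X := by
  apply Finset.prod_pos
  intro p hp
  simp only [Finset.mem_filter] at hp
  exact pow_pos hp.2.pos _

lemma log_le_fact_Lprod {p X : ℕ} (hp : p.Prime) :
    Nat.log p X ≤ (Lprod X).factorization p := by
  rcases le_or_gt p X with h | h
  · have hmem : p ∈ (Finset.range (X + 1)).filter Nat.Prime := by
      simp only [Finset.mem_filter, Finset.mem_range]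
      exact ⟨by omega, hp⟩
    have hdvd : p ^ (Nat.log p X) ∣ Lprod X := Finset.dvd_prod_of_mem _ hmem
    exact (Nat.Prime.pow_dvd_iff_le_factorization hp (Lprod_pos X).ne').mp hdvd
  · have : Nat.log p X = 0 := Nat.log_eq_zero_iff.mpr (Or.inl h)
    omega

lemma log_le_two_sqrt {x : ℝ} (hx : 1 ≤ x) : Real.log x ≤ 2 * Real.sqrt x := by
  have h0 : (0:ℝ) < x := by linarith
  have h1 : Real.log (Real.sqrt x) = Real.log x / 2 := Real.log_sqrt h0.le
  have h2 : Real.log (Real.sqrt x) ≤ Real.sqrt x - 1 :=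
    Real.log_le_sub_one_of_pos (Real.sqrt_pos.mpr h0)
  nlinarith [Real.sqrt_nonneg x]

lemma Lprod_le (X : ℕ) (hX : 1 ≤ X) : (Lprod X : ℝ) ≤ 32 ^ X := by
  classical
  set P := (Finset.range (X + 1)).filter Nat.Prime with hP
  have hsplit : Lprod X = (∏ p ∈ P, p) * ∏ p ∈ P, p ^ (Nat.log p X - 1) := by
    rw [Lprod, ← Finset.prod_mul_distrib]
    apply Finset.prod_congr rfl
    intro p hp
    simp only [hP, Finset.mem_filter, Finset.mem_range] at hp
    have h1 : 1 ≤ Nat.log p X := Nat.log_pos hp.2.one_lt (by omega)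
    rw [← pow_succ']
    congr 1
    omega
  have hprimorial : (∏ p ∈ P, p) ≤ 4 ^ X := by
    have := primorial_le_4_pow X
    unfold primorial at this
    convert this using 2
  have hsecond2 : (∏ p ∈ P, p ^ (Nat.log p X - 1)) ≤ X ^ (Nat.sqrt X) := hsecond X hX
  have hXpow2 : ((X:ℝ)) ^ (Nat.sqrt X) ≤ 8 ^ X := hXpow X hX
  calc (Lprod X : ℝ) = ((∏ p ∈ P, p : ℕ) : ℝ) * ((∏ p ∈ P, p ^ (Nat.log p X - 1) : ℕ) : ℝ) := by
        rw [hsplit]; push_cast; ring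
    _ ≤ 4 ^ X * 8 ^ X := by
        apply mul_le_mul
        · exact_mod_cast le_trans (Nat.cast_le.mpr hprimorial) (le_refl _)
        · exact le_trans (by exact_mod_cast Nat.cast_le.mpr hsecond2) hXpow2
        · positivity
        · positivity
    _ = 32 ^ X := by rw [← mul_pow]; norm_num


lemma sum_div_pow_le (m K p : ℕ) (hp : 2 ≤ p) :
    ∑ k ∈ Finset.Icc 1 K, m / p ^ k ≤ m := by
  have key : ∀ K, (∑ k ∈ Finset.Icc 1 K, m / p ^ k) + m / p ^ K ≤ m := by
    intro K
    induction K with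
    | zero => simp
    | succ K ih =>
      rw [Finset.sum_Icc_succ_top (by omega : 1 ≤ K + 1)]
      have h1 : m / p ^ (K+1) = (m / p ^ K) / p := by
        rw [pow_succ, Nat.div_div_eq_div_mul]
      have h2 : m / p ^ (K+1) + m / p ^ (K+1) ≤ m / p ^ K := by
        rw [h1]
        have := Nat.div_mul_le_self (m / p ^ K) p
        have h3 : (m / p ^ K) / p ≤ (m / p ^ K) / 2 := by
          apply Nat.div_le_div_left hp (by omega)
        omega
      omega
  exact le_trans (Nat.le_add_right _ _) (key K)

lemma poch_eval_prod (x : ℚ) (m : ℕ) :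
    (ascPochhammer ℚ m).eval x = ∏ i ∈ Finset.range m, (x + i) := by
  induction m with
  | zero => simp
  | succ m ih => rw [ascPochhammer_succ_eval, ih, Finset.prod_range_succ]

/-- For rationals `a, b`, neither a nonpositive integer, the common denominator of
`(a)_0/(b)_0, …, (a)_n/(b)_n` grows at most geometrically in `n`. -/
theorem pochhammer_ratio_denominator_growth (a b : ℚ)
    (ha : ∀ k : ℕ, a ≠ -(k : ℚ)) (hb : ∀ k : ℕ, b ≠ -(k : ℚ)) :
    ∃ C : ℝ, 0 < C ∧ ∀ n : ℕ, ∃ d : ℕ, 0 < d ∧ (d : ℝ) ≤ C ^ n ∧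
      ∀ m ≤ n,
        ((d : ℚ) * ((ascPochhammer ℚ m).eval a / (ascPochhammer ℚ m).eval b)).den = 1 := by
  classical
  set A : ℤ := a.num with hA
  set B : ℤ := b.num with hB
  have hα : 0 < a.den := a.pos
  have hβ : 0 < b.den := b.pos
  -- nonvanishing of the integer factors
  have htermA : ∀ i : ℕ, A + (i : ℤ) * a.den ≠ 0 := by
    intro i h
    apply ha i
    have h1 : (A : ℚ) = -((i : ℚ) * (a.den : ℚ)) := by
      have : (A : ℚ) + (i : ℚ) * (a.den : ℚ) = 0 := by exact_mod_cast congrArg (Int.cast : ℤ → ℚ) h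
      linarith
    have h2 : a = (A : ℚ) / (a.den : ℚ) := (Rat.num_div_den a).symm
    rw [h2, h1]
    field_simp
  have htermB : ∀ i : ℕ, B + (i : ℤ) * b.den ≠ 0 := by
    intro i h
    apply hb i
    have h1 : (B : ℚ) = -((i : ℚ) * (b.den : ℚ)) := by
      have : (B : ℚ) + (i : ℚ) * (b.den : ℚ) = 0 := by exact_mod_cast congrArg (Int.cast : ℤ → ℚ) h
      linarith
    have h2 : b = (B : ℚ) / (b.den : ℚ) := (Rat.num_div_den b).symm
    rw [h2, h1]
    field_simp
  set c : ℕ := A.natAbs + B.natAbs + a.den + b.den with hc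
  refine ⟨(a.den : ℝ) ^ 2 * 1024 ^ c, by positivity, ?_⟩
  intro n
  rcases Nat.eq_zero_or_pos n with rfl | hn
  · refine ⟨1, by norm_num, by norm_num, ?_⟩
    intro m hm
    interval_cases m
    simp
  set X : ℕ := A.natAbs + B.natAbs + (a.den + b.den) * n with hX
  have hX1 : 1 ≤ X := by
    have : 1 ≤ (a.den + b.den) * n := Nat.one_le_iff_ne_zero.mpr (by positivity)
    omega
  set d : ℕ := a.den ^ (2 * n) * (Lprod X) ^ 2 with hd
  have hd0 : 0 < d := by
    apply Nat.mul_pos (pow_pos hα _) (pow_pos (Lprod_pos X) _)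
  refine ⟨d, hd0, ?_, ?_⟩
  · -- size bound
    have hL : (Lprod X : ℝ) ≤ 32 ^ X := Lprod_le X hX1
    have hXcn : X ≤ c * n := by
      have h1 : A.natAbs + B.natAbs ≤ (A.natAbs + B.natAbs) * n := Nat.le_mul_of_pos_right _ hn
      calc X = A.natAbs + B.natAbs + (a.den + b.den) * n := rfl
        _ ≤ (A.natAbs + B.natAbs) * n + (a.den + b.den) * n := by omega
        _ = c * n := by rw [hc]; ring
    have hcast : (d : ℝ) = (a.den : ℝ) ^ (2 * n) * (Lprod X : ℝ) ^ 2 := by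
      rw [hd]; push_cast; ring
    rw [hcast]
    have h32 : (Lprod X : ℝ) ^ 2 ≤ (1024 : ℝ) ^ X := by
      have h1 : (Lprod X : ℝ) ^ 2 ≤ (32 ^ X : ℝ) ^ 2 := by
        apply pow_le_pow_left₀ (by positivity) hL
      calc (Lprod X : ℝ) ^ 2 ≤ (32 ^ X : ℝ) ^ 2 := h1
        _ = 1024 ^ X := by rw [← pow_mul, Nat.mul_comm X 2, pow_mul]; norm_num
    calc (a.den : ℝ) ^ (2 * n) * (Lprod X : ℝ) ^ 2
        ≤ (a.den : ℝ) ^ (2 * n) * (1024 : ℝ) ^ X := by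
          apply mul_le_mul_of_nonneg_left h32 (by positivity)
      _ ≤ (a.den : ℝ) ^ (2 * n) * (1024 : ℝ) ^ (c * n) := by
          apply mul_le_mul_of_nonneg_left ?_ (by positivity)
          apply pow_le_pow_right₀ (by norm_num) hXcn
      _ = ((a.den : ℝ) ^ 2 * 1024 ^ c) ^ n := by
          rw [mul_pow, ← pow_mul, ← pow_mul, Nat.mul_comm 2 n, Nat.mul_comm c n]
  · -- main divisibility
    intro m hm
    set M : ℤ := ∏ i ∈ Finset.range m, (A + (i : ℤ) * a.den) with hM
    set N : ℤ := ∏ i ∈ Finset.range m, (B + (i : ℤ) * b.den) with hN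
    have hM0 : M ≠ 0 := Finset.prod_ne_zero_iff.mpr (fun i _ => htermA i)
    have hN0 : N ≠ 0 := Finset.prod_ne_zero_iff.mpr (fun i _ => htermB i)
    have hMX : ∀ i < m, (A + (i : ℤ) * a.den).natAbs ≤ X := by
      intro i hi
      have h1 : (A + (i : ℤ) * a.den).natAbs ≤ A.natAbs + ((i : ℤ) * a.den).natAbs :=
        Int.natAbs_add_le _ _
      have h2 : ((i : ℤ) * a.den).natAbs = i * a.den := by
        rw [Int.natAbs_mul]; simp
      have h3 : i * a.den < n * a.den := (Nat.mul_lt_mul_right hα).mpr (by omega)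
      have h4 : a.den * n ≤ (a.den + b.den) * n := Nat.mul_le_mul_right n (by omega)
      have h5 : n * a.den = a.den * n := Nat.mul_comm _ _
      omega
    have hNX : ∀ i < m, (B + (i : ℤ) * b.den).natAbs ≤ X := by
      intro i hi
      have h1 : (B + (i : ℤ) * b.den).natAbs ≤ B.natAbs + ((i : ℤ) * b.den).natAbs :=
        Int.natAbs_add_le _ _
      have h2 : ((i : ℤ) * b.den).natAbs = i * b.den := by
        rw [Int.natAbs_mul]; simp
      have h3 : i * b.den < n * b.den := (Nat.mul_lt_mul_right hβ).mpr (by omega)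
      have h4 : b.den * n ≤ (a.den + b.den) * n := Nat.mul_le_mul_right n (by omega)
      have h5 : n * b.den = b.den * n := Nat.mul_comm _ _
      omega
    -- the natural number divisibility
    have hdvdNat : a.den ^ m * N.natAbs ∣ d * (b.den ^ m * M.natAbs) := by
      have hL1 : a.den ^ m * N.natAbs ≠ 0 := by
        apply Nat.mul_ne_zero (pow_ne_zero _ (by omega)) (Int.natAbs_ne_zero.mpr hN0)
      have hR1 : d * (b.den ^ m * M.natAbs) ≠ 0 := by
        apply Nat.mul_ne_zero (by omega)
        exact Nat.mul_ne_zero (pow_ne_zero _ (by omega)) (Int.natAbs_ne_zero.mpr hM0)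
      rw [← Nat.factorization_le_iff_dvd hL1 hR1, Finsupp.le_def]
      intro p
      by_cases hp : p.Prime
      swap
      · simp [Nat.factorization_eq_zero_of_not_prime _ hp]
      -- expand factorizations
      have hexp : ∀ x y : ℕ, x ≠ 0 → y ≠ 0 → (x * y).factorization p
          = x.factorization p + y.factorization p := by
        intro x y hx hy
        rw [Nat.factorization_mul hx hy]; rfl
      rw [hexp _ _ (pow_ne_zero _ (by omega)) (Int.natAbs_ne_zero.mpr hN0),
        hexp _ _ (by omega) (Nat.mul_ne_zero (pow_ne_zero _ (by omega)) (Int.natAbs_ne_zero.mpr hM0)),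
        hexp _ _ (pow_ne_zero _ (by omega)) (Int.natAbs_ne_zero.mpr hM0),
        hd, hexp _ _ (pow_ne_zero _ (by omega)) (pow_ne_zero _ (Lprod_pos X).ne'),
        Nat.factorization_pow, Nat.factorization_pow, Nat.factorization_pow, Nat.factorization_pow]
      simp only [Finsupp.smul_apply, smul_eq_mul]
      set vα := (a.den).factorization p with hvα
      set vβ := (b.den).factorization p with hvβ
      set vL := (Lprod X).factorization p with hvL
      set vM := M.natAbs.factorization p with hvM
      set vN := N.natAbs.factorization p with hvN
      -- goal : m * vα + vN ≤ (2*n) * vα + 2 * vL + (m * vβ + vM)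
      show m * vα + vN ≤ 2 * n * vα + 2 * vL + (m * vβ + vM)
      by_cases hpβ : p ∣ b.den
      · -- vN = 0
        have hvN0 : vN = 0 := by
          rw [hvN]
          apply Nat.factorization_eq_zero_of_not_dvd
          intro hdvd
          have h1 : (p : ℤ) ∣ N := Int.natCast_dvd.mpr hdvd
          have hpI : Prime (p : ℤ) := Nat.prime_iff_prime_int.mp hp
          obtain ⟨i, hi, hdvd2⟩ := (Prime.dvd_finset_prod_iff hpI _).mp (hN ▸ h1)
          have h2 : (p : ℤ) ∣ (i : ℤ) * b.den := Dvd.dvd.mul_left (Int.natCast_dvd_natCast.mpr hpβ) _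
          have h3 : (p : ℤ) ∣ B := by
            have := dvd_sub hdvd2 h2
            simpa using this
          have h4 : p ∣ B.natAbs := Int.natCast_dvd.mp h3
          have h5 : p ∣ Nat.gcd B.natAbs b.den := Nat.dvd_gcd h4 hpβ
          rw [Nat.Coprime.gcd_eq_one b.reduced] at h5
          exact hp.one_lt.ne' (Nat.dvd_one.mp h5)
        rw [hvN0]
        have h1 : m * vα ≤ 2 * n * vα := Nat.mul_le_mul_right vα (by omega)
        omega
      · -- p ∤ b.den
        have hcoβ : ∀ k : ℕ, IsCoprime ((b.den : ℤ)) (((p ^ k : ℕ) : ℤ)) := by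
          intro k
          rw [Nat.isCoprime_iff_coprime]
          exact Nat.Coprime.pow_right k ((hp.coprime_iff_not_dvd.mpr hpβ)).symm
        set K := Nat.log p X with hK
        set S := ∑ k ∈ Finset.Icc 1 K, m / p ^ k with hS
        have hNsum : vN = ∑ k ∈ Finset.Icc 1 K,
            ((Finset.range m).filter (fun i : ℕ => ((p:ℤ)) ^ k ∣ B + (i:ℤ) * b.den)).card := by
          rw [hvN, hN]
          exact prod_fact_eq_sum_counts p m X hp _ (fun i _ => htermB i) (fun i hi => hNX i hi)
        have hNle : vN ≤ S + K := by
          rw [hNsum]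
          calc ∑ k ∈ Finset.Icc 1 K,
              ((Finset.range m).filter (fun i : ℕ => ((p:ℤ)) ^ k ∣ B + (i:ℤ) * b.den)).card
              ≤ ∑ k ∈ Finset.Icc 1 K, (m / p ^ k + 1) := by
                apply Finset.sum_le_sum
                intro k _
                have := count_upper (p ^ k) m (pow_pos hp.pos k) B b.den (hcoβ k)
                simpa [Nat.cast_pow] using this
            _ = S + K := by
                rw [Finset.sum_add_distrib, Finset.sum_const, Nat.card_Icc]
                simp [hS]
        have hKvL : K ≤ vL := log_le_fact_Lprod hp
        by_cases hpα : p ∣ a.den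
        · have hvα1 : 1 ≤ vα := hp.factorization_pos_of_dvd (by omega) hpα
          have hSm : S ≤ m := sum_div_pow_le m K p hp.two_le
          have h2 : m * vα + m ≤ 2 * n * vα := by
            have e1 : m * vα ≤ n * vα := Nat.mul_le_mul_right _ hm
            have e2 : m ≤ n * vα := le_trans hm (Nat.le_mul_of_pos_right n hvα1)
            have e3 : n * vα + n * vα = 2 * n * vα := by ring
            omega
          omega
        · have hvα0 : vα = 0 := Nat.factorization_eq_zero_of_not_dvd hpα
          have hvβ0 : vβ = 0 := Nat.factorization_eq_zero_of_not_dvd hpβ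
          have hcoα : ∀ k : ℕ, IsCoprime ((a.den : ℤ)) (((p ^ k : ℕ) : ℤ)) := by
            intro k
            rw [Nat.isCoprime_iff_coprime]
            exact Nat.Coprime.pow_right k ((hp.coprime_iff_not_dvd.mpr hpα)).symm
          have hMsum : vM = ∑ k ∈ Finset.Icc 1 K,
              ((Finset.range m).filter (fun i : ℕ => ((p:ℤ)) ^ k ∣ A + (i:ℤ) * a.den)).card := by
            rw [hvM, hM]
            exact prod_fact_eq_sum_counts p m X hp _ (fun i _ => htermA i) (fun i hi => hMX i hi)
          have hMge : S ≤ vM := by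
            rw [hMsum, hS]
            apply Finset.sum_le_sum
            intro k _
            have := count_lower (p ^ k) m (pow_pos hp.pos k) A a.den (hcoα k)
            simpa [Nat.cast_pow] using this
          rw [hvα0, hvβ0]
          simp only [Nat.mul_zero, Nat.zero_add, Nat.add_zero, Nat.mul_zero]
          omega
    -- from nat divisibility to integer divisibility
    have hdvdInt : ((a.den : ℤ)) ^ m * N ∣ (d : ℤ) * ((b.den : ℤ) ^ m * M) := by
      rw [← Int.natAbs_dvd_natAbs]
      have e1 : (((a.den : ℤ)) ^ m * N).natAbs = a.den ^ m * N.natAbs := by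
        rw [Int.natAbs_mul, Int.natAbs_pow]; simp
      have e2 : ((d : ℤ) * ((b.den : ℤ) ^ m * M)).natAbs = d * (b.den ^ m * M.natAbs) := by
        rw [Int.natAbs_mul, Int.natAbs_mul, Int.natAbs_pow]; simp
      rw [e1, e2]; exact hdvdNat
    obtain ⟨z, hz⟩ := hdvdInt
    have hαQ : ((a.den : ℚ)) ≠ 0 := Nat.cast_ne_zero.mpr (by omega)
    have hβQ : ((b.den : ℚ)) ≠ 0 := Nat.cast_ne_zero.mpr (by omega)
    have hNQ : ((N : ℚ)) ≠ 0 := Int.cast_ne_zero.mpr hN0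
    have hnda : a * (a.den : ℚ) = (A : ℚ) := Rat.mul_den_eq_num a
    have hndb : b * (b.den : ℚ) = (B : ℚ) := Rat.mul_den_eq_num b
    have hevala : (ascPochhammer ℚ m).eval a = (M : ℚ) / (a.den : ℚ) ^ m := by
      rw [poch_eval_prod]
      have hcongr : ∀ i ∈ Finset.range m,
          a + (i : ℚ) = ((A + (i:ℤ) * a.den : ℤ) : ℚ) / (a.den : ℚ) := by
        intro i _
        push_cast
        field_simp
        linear_combination hnda
      rw [Finset.prod_congr rfl hcongr, Finset.prod_div_distrib, Finset.prod_const,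
        Finset.card_range]
      congr 1
      rw [hM]
      push_cast
      rfl
    have hevalb : (ascPochhammer ℚ m).eval b = (N : ℚ) / (b.den : ℚ) ^ m := by
      rw [poch_eval_prod]
      have hcongr : ∀ i ∈ Finset.range m,
          b + (i : ℚ) = ((B + (i:ℤ) * b.den : ℤ) : ℚ) / (b.den : ℚ) := by
        intro i _
        push_cast
        field_simp
        linear_combination hndb
      rw [Finset.prod_congr rfl hcongr, Finset.prod_div_distrib, Finset.prod_const,
        Finset.card_range]
      congr 1
      rw [hN]
      push_cast
      rfl
    have hzQ : (d : ℚ) * ((b.den : ℚ) ^ m * (M : ℚ)) = ((a.den : ℚ) ^ m * (N : ℚ)) * (z : ℚ) := by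
      exact_mod_cast congrArg (fun t : ℤ => (t : ℚ)) hz
    have key : (d : ℚ) * ((ascPochhammer ℚ m).eval a / (ascPochhammer ℚ m).eval b) = (z : ℚ) := by
      rw [hevala, hevalb]
      field_simp
      linear_combination hzQ
    rw [key, Rat.den_intCast]
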